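/- Let $\alpha \in (0,1)$, $T > 0$, $\delta \ge 1$, $C_0 > 0$, and consider the graded mesh. Let $u : [0,T] \to \mathbb{R}$ be continuous on $[0,T]$ and twice continuously differentiable on $(0,T]$ with $|u'(t)| \le C_0\, t^{\alpha-1}$ and $|u''(t)| \le C_0\, t^{\alpha-2}$ for all $t \in (0,T]$. Define $\psi^1 := \tau_1^{\alpha}\, \sup_{s \in (0,t_1)} \big( s^{1-\alpha}\, \big| \tfrac{u(t_1)-u(t_0)}{\tau_1} - u'(s) \big| \big)$ and $\psi^j := \tau_j^{2-\alpha}\, t_j^{\alpha}\, \sup_{s \in (t_{j-1}, t_j)} |u''(s)|$ for $2 \le j \le N$. Then there exists a constant $C > 0$, depending only on $C_0$, $\alpha$, $\delta$ and $T$, such that $\psi^j \le C\, N^{-\min\{\delta\alpha,\; 2-\alpha\}}$ for every $N \ge 1$ and every $1 \le j \le N$. -/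

import Mathlib

open Real Set

private lemma aux_rpow_sub {y x δ : ℝ} (hy : 0 ≤ y) (hxy : y ≤ x) (hδ : 1 ≤ δ) :
    x ^ δ - y ^ δ ≤ δ * x ^ (δ - 1) * (x - y) := by
  rcases eq_or_lt_of_le hxy with rfl | h
  · simp
  · have hcont : ContinuousOn (fun s : ℝ => s ^ δ) (Set.Icc y x) := fun s _ =>
      (Real.continuousAt_rpow_const s δ (Or.inr (by linarith))).continuousWithinAt
    have hderiv : ∀ s ∈ Set.Ioo y x, HasDerivAt (fun s : ℝ => s ^ δ) (δ * s ^ (δ - 1)) s :=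
      fun s hs => Real.hasDerivAt_rpow_const (Or.inl (ne_of_gt (lt_of_le_of_lt hy hs.1)))
    obtain ⟨c, hc, hc'⟩ := exists_hasDerivAt_eq_slope (fun s : ℝ => s ^ δ)
      (fun s => δ * s ^ (δ - 1)) h hcont hderiv
    have hcx : c ^ (δ - 1) ≤ x ^ (δ - 1) :=
      Real.rpow_le_rpow (le_of_lt (lt_of_le_of_lt hy hc.1)) hc.2.le (by linarith)
    rw [eq_div_iff (by linarith : x - y ≠ 0)] at hc'
    rw [← hc']
    have h1 : 0 ≤ x - y := by linarith
    have h2 : 0 ≤ δ := by linarith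
    exact mul_le_mul_of_nonneg_right (mul_le_mul_of_nonneg_left hcx h2) h1

private lemma aux_u_bound (α T C₀ : ℝ) (hα0 : 0 < α) (hα1 : α < 1) (hC₀ : 0 < C₀)
    {t1 : ℝ} (ht1 : 0 < t1) (ht1T : t1 ≤ T)
    (u u' u'' : ℝ → ℝ) (hu : ContinuousOn u (Set.Icc 0 T))
    (hu' : ∀ s ∈ Set.Ioc (0:ℝ) T, HasDerivAt u (u' s) s)
    (hu'' : ∀ s ∈ Set.Ioc (0:ℝ) T, HasDerivAt u' (u'' s) s)
    (hbd : ∀ s ∈ Set.Ioc (0:ℝ) T, |u' s| ≤ C₀ * s ^ (α - 1)) :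
    |u t1 - u 0| ≤ C₀ / α * t1 ^ α := by
  have hg : IntervalIntegrable (fun s : ℝ => C₀ * s ^ (α - 1)) MeasureTheory.volume 0 t1 :=
    (intervalIntegral.intervalIntegrable_rpow' (by linarith)).const_mul C₀
  have huIoc : Set.uIoc (0:ℝ) t1 = Set.Ioc 0 t1 := Set.uIoc_of_le ht1.le
  have hcont' : ContinuousOn u' (Set.Ioc 0 t1) := fun s hs =>
    ((hu'' s ⟨hs.1, hs.2.trans ht1T⟩).continuousAt).continuousWithinAt
  have hmeas : MeasureTheory.AEStronglyMeasurable u'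
      (MeasureTheory.volume.restrict (Set.uIoc (0:ℝ) t1)) := by
    rw [huIoc]; exact hcont'.aestronglyMeasurable measurableSet_Ioc
  have hae : ∀ᵐ s ∂(MeasureTheory.volume.restrict (Set.uIoc (0:ℝ) t1)),
      ‖u' s‖ ≤ C₀ * s ^ (α - 1) := by
    rw [huIoc, MeasureTheory.ae_restrict_iff' measurableSet_Ioc]
    filter_upwards with s hs
    exact hbd s ⟨hs.1, hs.2.trans ht1T⟩
  have hint : IntervalIntegrable u' MeasureTheory.volume 0 t1 := by
    refine hg.mono_fun hmeas ?_
    filter_upwards [hae] with s hs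
    calc ‖u' s‖ ≤ C₀ * s ^ (α - 1) := hs
      _ ≤ |C₀ * s ^ (α - 1)| := le_abs_self _
  have hFTC : ∫ s in (0:ℝ)..t1, u' s = u t1 - u 0 :=
    intervalIntegral.integral_eq_sub_of_hasDeriv_right_of_le ht1.le
      (hu.mono (Set.Icc_subset_Icc le_rfl ht1T))
      (fun s hs => ((hu' s ⟨hs.1, hs.2.le.trans ht1T⟩)).hasDerivWithinAt) hint
  have hnorm : ‖∫ s in (0:ℝ)..t1, u' s‖ ≤ |∫ s in (0:ℝ)..t1, C₀ * s ^ (α - 1)| :=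
    intervalIntegral.norm_integral_le_abs_of_norm_le hae hg
  have hval : ∫ s in (0:ℝ)..t1, C₀ * s ^ (α - 1) = C₀ / α * t1 ^ α := by
    rw [intervalIntegral.integral_const_mul, integral_rpow (Or.inl (by linarith))]
    have h1 : α - 1 + 1 = α := by ring
    rw [h1, Real.zero_rpow (by linarith : α ≠ 0)]
    ring
  rw [← hFTC]
  calc |∫ s in (0:ℝ)..t1, u' s| = ‖∫ s in (0:ℝ)..t1, u' s‖ := (Real.norm_eq_abs _).symm
    _ ≤ |∫ s in (0:ℝ)..t1, C₀ * s ^ (α - 1)| := hnorm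
    _ = C₀ / α * t1 ^ α := by
        rw [hval, abs_of_nonneg (by positivity)]

private lemma aux_exp (α δ : ℝ) (hα0 : 0 < α) (hα1 : α < 1) (hδ : 1 ≤ δ)
    {x n : ℝ} (hx : 0 < x) (hx1 : x ≤ 1) (hn : 1 ≤ n) (hxn : n⁻¹ ≤ x) :
    x ^ (δ * α - (2 - α)) * n ^ (-(2 - α)) ≤ n ^ (-(min (δ * α) (2 - α))) := by
  have hn0 : (0:ℝ) < n := lt_of_lt_of_le one_pos hn
  rcases le_or_gt 0 (δ * α - (2 - α)) with he | he
  · calc x ^ (δ * α - (2 - α)) * n ^ (-(2 - α)) ≤ 1 * n ^ (-(2 - α)) :=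
        mul_le_mul_of_nonneg_right (Real.rpow_le_one hx.le hx1 he)
          (Real.rpow_nonneg hn0.le _)
      _ = n ^ (-(2 - α)) := one_mul _
      _ ≤ n ^ (-(min (δ * α) (2 - α))) :=
        Real.rpow_le_rpow_of_exponent_le hn (neg_le_neg (min_le_right _ _))
  · have h2 : (n⁻¹ : ℝ) ^ (δ * α - (2 - α)) = n ^ (-(δ * α - (2 - α))) := by
      rw [Real.inv_rpow hn0.le, ← Real.rpow_neg hn0.le]
    calc x ^ (δ * α - (2 - α)) * n ^ (-(2 - α))
        ≤ n ^ (-(δ * α - (2 - α))) * n ^ (-(2 - α)) := by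
          rw [← h2]
          exact mul_le_mul_of_nonneg_right
            (Real.rpow_le_rpow_of_nonpos (inv_pos.2 hn0) hxn he.le)
            (Real.rpow_nonneg hn0.le _)
      _ = n ^ (-(δ * α - (2 - α)) + -(2 - α)) := (Real.rpow_add hn0 _ _).symm
      _ = n ^ (-(δ * α)) := by congr 1; ring
      _ ≤ n ^ (-(min (δ * α) (2 - α))) :=
        Real.rpow_le_rpow_of_exponent_le hn (neg_le_neg (min_le_left _ _))

private lemma aux_combine (α T δ C₀ : ℝ) (hα0 : 0 < α) (hα1 : α < 1) (hT : 0 < T)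
    (hδ : 1 ≤ δ) (hC₀ : 0 < C₀) {x n : ℝ} (hx : 0 < x) (hx1 : x ≤ 1)
    (hn : 1 ≤ n) (hxn : n⁻¹ ≤ x) :
    (T * δ * x ^ (δ - 1) * n⁻¹) ^ (2 - α) * (T * x ^ δ) ^ α *
        (C₀ * (T * (x / 2) ^ δ) ^ (α - 2)) ≤
      (C₀ * T ^ α * δ ^ (2 - α) * 2 ^ (δ * (2 - α))) * n ^ (-(min (δ * α) (2 - α))) := by
  have hn0 : (0:ℝ) < n := lt_of_lt_of_le one_pos hn
  have hδ0 : (0:ℝ) < δ := lt_of_lt_of_le one_pos hδ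
  have hx2 : (0:ℝ) < x / 2 := by positivity
  have hb1 : (0:ℝ) < T * δ * x ^ (δ - 1) * n⁻¹ := by positivity
  have hb2 : (0:ℝ) < T * x ^ δ := by positivity
  have hb3 : (0:ℝ) < T * (x / 2) ^ δ := by positivity
  have hrp : ∀ a p : ℝ, 0 < a → a ^ p = Real.exp (p * Real.log a) := fun a p ha => by
    rw [Real.rpow_def_of_pos ha, mul_comm]
  have l1 : Real.log (T * δ * x ^ (δ - 1) * n⁻¹) =
      Real.log T + Real.log δ + (δ - 1) * Real.log x - Real.log n := by
    rw [Real.log_mul (by positivity) (by positivity),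
      Real.log_mul (by positivity) (by positivity),
      Real.log_mul (by positivity) (by positivity), Real.log_rpow hx, Real.log_inv]
    ring
  have l2 : Real.log (T * x ^ δ) = Real.log T + δ * Real.log x := by
    rw [Real.log_mul hT.ne' (by positivity), Real.log_rpow hx]
  have l3 : Real.log (T * (x / 2) ^ δ) =
      Real.log T + δ * (Real.log x - Real.log 2) := by
    rw [Real.log_mul hT.ne' (by positivity), Real.log_rpow hx2,
      Real.log_div hx.ne' two_ne_zero]
  have hL : (T * δ * x ^ (δ - 1) * n⁻¹) ^ (2 - α) * (T * x ^ δ) ^ α *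
      (C₀ * (T * (x / 2) ^ δ) ^ (α - 2)) =
      C₀ * Real.exp ((2 - α) * Real.log (T * δ * x ^ (δ - 1) * n⁻¹) +
        (α * Real.log (T * x ^ δ) + (α - 2) * Real.log (T * (x / 2) ^ δ))) := by
    rw [hrp _ _ hb1, hrp _ _ hb2, hrp _ _ hb3, Real.exp_add, Real.exp_add]
    ring
  have hR : (C₀ * T ^ α * δ ^ (2 - α) * 2 ^ (δ * (2 - α))) *
      (x ^ (δ * α - (2 - α)) * n ^ (-(2 - α))) =
      C₀ * Real.exp (α * Real.log T + ((2 - α) * Real.log δ +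
        ((δ * (2 - α)) * Real.log 2 + ((δ * α - (2 - α)) * Real.log x +
          (-(2 - α)) * Real.log n)))) := by
    rw [hrp T α hT, hrp δ (2 - α) hδ0, hrp 2 (δ * (2 - α)) two_pos,
      hrp x (δ * α - (2 - α)) hx, hrp n (-(2 - α)) hn0,
      Real.exp_add, Real.exp_add, Real.exp_add, Real.exp_add]
    ring
  have key : (T * δ * x ^ (δ - 1) * n⁻¹) ^ (2 - α) * (T * x ^ δ) ^ α *
      (C₀ * (T * (x / 2) ^ δ) ^ (α - 2)) =
      (C₀ * T ^ α * δ ^ (2 - α) * 2 ^ (δ * (2 - α))) *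
        (x ^ (δ * α - (2 - α)) * n ^ (-(2 - α))) := by
    rw [hL, hR, l1, l2, l3]
    congr 1
    congr 1
    ring
  rw [key]
  exact mul_le_mul_of_nonneg_left (aux_exp α δ hα0 hα1 hδ hx hx1 hn hxn) (by positivity)

set_option maxHeartbeats 1000000 in
/-- On the graded mesh, if `u` is continuous on `[0,T]`, twice continuously
differentiable on `(0,T]` with `|u'(t)| ≤ C₀ t^(α-1)` and `|u''(t)| ≤ C₀ t^(α-2)`,
then the L1 local quantities `ψ j` satisfy `ψ j ≤ C * N^(-min(δα, 2-α))`. -/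
theorem graded_mesh_psi_bound
    (α T δ C₀ : ℝ) (hα : α ∈ Set.Ioo (0 : ℝ) 1) (hT : 0 < T) (hδ : 1 ≤ δ)
    (hC₀ : 0 < C₀) :
    ∃ C : ℝ, 0 < C ∧
      ∀ (N : ℕ), 1 ≤ N →
        ∀ (t τ : ℕ → ℝ), (∀ m, t m = T * ((m : ℝ) / (N : ℝ)) ^ δ) →
          (∀ m, 1 ≤ m → τ m = t m - t (m - 1)) →
          ∀ (u u' u'' : ℝ → ℝ),
            ContinuousOn u (Set.Icc 0 T) →
            (∀ s ∈ Set.Ioc (0 : ℝ) T, HasDerivAt u (u' s) s) →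
            (∀ s ∈ Set.Ioc (0 : ℝ) T, HasDerivAt u' (u'' s) s) →
            ContinuousOn u'' (Set.Ioc 0 T) →
            (∀ s ∈ Set.Ioc (0 : ℝ) T, |u' s| ≤ C₀ * s ^ (α - 1)) →
            (∀ s ∈ Set.Ioc (0 : ℝ) T, |u'' s| ≤ C₀ * s ^ (α - 2)) →
            ∀ (ψ : ℕ → ℝ),
              ψ 1 = τ 1 ^ α *
                sSup ((fun s => s ^ (1 - α) * |(u (t 1) - u (t 0)) / τ 1 - u' s|) ''
                  Set.Ioo 0 (t 1)) →
              (∀ j, 2 ≤ j → j ≤ N →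
                ψ j = τ j ^ (2 - α) * t j ^ α *
                  sSup ((fun s => |u'' s|) '' Set.Ioo (t (j - 1)) (t j))) →
              ∀ j, 1 ≤ j → j ≤ N →
                ψ j ≤ C * (N : ℝ) ^ (-(min (δ * α) (2 - α))) := by
  obtain ⟨hα0, hα1⟩ := hα
  have hδ0 : (0:ℝ) < δ := lt_of_lt_of_le one_pos hδ
  refine ⟨C₀ * T ^ α * (1 + α⁻¹) + C₀ * T ^ α * δ ^ (2 - α) * 2 ^ (δ * (2 - α)),
    by positivity, ?_⟩
  intro N hN t τ ht hτ u u' u'' hu hu' hu'' hu''c hb1 hb2 ψ hψ1 hψj j hj1 hjN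
  set m := min (δ * α) (2 - α) with hmdef
  have hn0 : (0:ℝ) < (N:ℝ) := by exact_mod_cast hN
  have hn1 : (1:ℝ) ≤ (N:ℝ) := by exact_mod_cast hN
  have hB : (0:ℝ) ≤ C₀ * T ^ α * δ ^ (2 - α) * 2 ^ (δ * (2 - α)) *
      (N:ℝ) ^ (-m) := by positivity
  have hA : (0:ℝ) ≤ C₀ * T ^ α * (1 + α⁻¹) * (N:ℝ) ^ (-m) := by positivity
  rcases (by omega : j = 1 ∨ 2 ≤ j) with rfl | hj2
  · -- case j = 1
    have ht0 : t 0 = 0 := by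
      rw [ht 0]
      simp [Real.zero_rpow hδ0.ne']
    have ht1 : t 1 = T * ((N:ℝ)⁻¹) ^ δ := by rw [ht 1]; norm_num
    have ht1pos : 0 < t 1 := by rw [ht1]; positivity
    have ht1T : t 1 ≤ T := by
      rw [ht1]
      nlinarith [Real.rpow_le_one (by positivity : (0:ℝ) ≤ (N:ℝ)⁻¹)
        (by simpa using inv_le_one_of_one_le₀ hn1) hδ0.le]
    have hτ1 : τ 1 = t 1 := by rw [hτ 1 le_rfl]; norm_num [ht0]
    have hD : |(u (t 1) - u (t 0)) / τ 1| ≤ C₀ / α * t 1 ^ (α - 1) := by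
      rw [ht0, hτ1, abs_div, abs_of_pos ht1pos, div_le_iff₀ ht1pos]
      have h1 := aux_u_bound α T C₀ hα0 hα1 hC₀ ht1pos ht1T u u' u'' hu hu' hu'' hb1
      have h2 : t 1 ^ (α - 1) * t 1 = t 1 ^ α := by
        rw [← Real.rpow_add_one ht1pos.ne']
        norm_num
      calc |u (t 1) - u 0| ≤ C₀ / α * t 1 ^ α := h1
        _ = C₀ / α * t 1 ^ (α - 1) * t 1 := by rw [mul_assoc, h2]
    have hsup : sSup ((fun s => s ^ (1 - α) * |(u (t 1) - u (t 0)) / τ 1 - u' s|) ''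
        Set.Ioo 0 (t 1)) ≤ C₀ * (1 + α⁻¹) := by
      refine Real.sSup_le ?_ (by positivity)
      rintro a ⟨s, hs, rfl⟩
      have hs0 : 0 < s := hs.1
      have hsT : s ∈ Set.Ioc (0:ℝ) T := ⟨hs0, hs.2.le.trans ht1T⟩
      have habs : |(u (t 1) - u (t 0)) / τ 1 - u' s| ≤
          C₀ / α * t 1 ^ (α - 1) + C₀ * s ^ (α - 1) := by
        calc |(u (t 1) - u (t 0)) / τ 1 - u' s|
            ≤ |(u (t 1) - u (t 0)) / τ 1| + |u' s| := abs_sub _ _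
          _ ≤ C₀ / α * t 1 ^ (α - 1) + C₀ * s ^ (α - 1) := add_le_add hD (hb1 s hsT)
      have hss : s ^ (1 - α) * s ^ (α - 1) = 1 := by
        rw [← Real.rpow_add hs0]; norm_num
      have hst : s ^ (1 - α) ≤ t 1 ^ (1 - α) :=
        Real.rpow_le_rpow hs0.le hs.2.le (by linarith)
      have htt : t 1 ^ (1 - α) * t 1 ^ (α - 1) = 1 := by
        rw [← Real.rpow_add ht1pos]; norm_num
      calc s ^ (1 - α) * |(u (t 1) - u (t 0)) / τ 1 - u' s|
          ≤ s ^ (1 - α) * (C₀ / α * t 1 ^ (α - 1) + C₀ * s ^ (α - 1)) :=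
            mul_le_mul_of_nonneg_left habs (Real.rpow_nonneg hs0.le _)
        _ = C₀ / α * (s ^ (1 - α) * t 1 ^ (α - 1)) + C₀ * (s ^ (1 - α) * s ^ (α - 1)) := by
            ring
        _ ≤ C₀ / α * (t 1 ^ (1 - α) * t 1 ^ (α - 1)) + C₀ * 1 := by
            rw [hss]
            have : s ^ (1 - α) * t 1 ^ (α - 1) ≤ t 1 ^ (1 - α) * t 1 ^ (α - 1) :=
              mul_le_mul_of_nonneg_right hst (Real.rpow_nonneg ht1pos.le _)
            nlinarith [div_nonneg hC₀.le hα0.le]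
        _ = C₀ * (1 + α⁻¹) := by rw [htt]; field_simp; ring
    have ht1a : t 1 ^ α = T ^ α * (N:ℝ) ^ (-(δ * α)) := by
      rw [ht1, Real.mul_rpow hT.le (Real.rpow_nonneg (by positivity) _),
        ← Real.rpow_mul (by positivity : (0:ℝ) ≤ (N:ℝ)⁻¹),
        Real.inv_rpow hn0.le, ← Real.rpow_neg hn0.le]
    calc ψ 1 ≤ τ 1 ^ α * (C₀ * (1 + α⁻¹)) := by
          rw [hψ1]
          exact mul_le_mul_of_nonneg_left hsup (Real.rpow_nonneg (by rw [hτ1]; exact ht1pos.le) _)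
      _ = C₀ * T ^ α * (1 + α⁻¹) * (N:ℝ) ^ (-(δ * α)) := by
          rw [hτ1, ht1a]; ring
      _ ≤ C₀ * T ^ α * (1 + α⁻¹) * (N:ℝ) ^ (-m) := by
          refine mul_le_mul_of_nonneg_left
            (Real.rpow_le_rpow_of_exponent_le hn1 (neg_le_neg (min_le_left _ _)))
            (by positivity)
      _ ≤ _ := by linarith
  · -- case 2 ≤ j
    have hjR1 : (1:ℝ) ≤ (j:ℝ) := by exact_mod_cast hj1
    have hjRN : (j:ℝ) ≤ (N:ℝ) := by exact_mod_cast hjN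
    set x : ℝ := (j:ℝ) / (N:ℝ) with hxdef
    have hx0 : 0 < x := by positivity
    have hx1 : x ≤ 1 := by rw [hxdef, div_le_one hn0]; exact hjRN
    have hxn : (N:ℝ)⁻¹ ≤ x := by
      rw [hxdef, inv_eq_one_div]
      gcongr
    have hcast : ((j - 1 : ℕ) : ℝ) = (j:ℝ) - 1 := by
      have : (1:ℕ) ≤ j := hj1
      push_cast [this]
      ring
    have htj : t j = T * x ^ δ := ht j
    have htjm : t (j - 1) = T * (((j:ℝ) - 1) / (N:ℝ)) ^ δ := by
      rw [ht (j - 1), hcast]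
    have hjm0 : (0:ℝ) ≤ ((j:ℝ) - 1) / (N:ℝ) :=
      div_nonneg (by linarith) hn0.le
    have hle : ((j:ℝ) - 1) / (N:ℝ) ≤ x := by
      rw [hxdef]
      gcongr <;> linarith
    have hhalf : x / 2 ≤ ((j:ℝ) - 1) / (N:ℝ) := by
      rw [hxdef, div_div]
      rw [div_le_div_iff₀ (by positivity) hn0]
      have hj2R : (2:ℝ) ≤ (j:ℝ) := by exact_mod_cast hj2
      nlinarith
    have htjmlb : T * (x / 2) ^ δ ≤ t (j - 1) := by
      rw [htjm]
      exact mul_le_mul_of_nonneg_left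
        (Real.rpow_le_rpow (by positivity) hhalf hδ0.le) hT.le
    have htjmpos : 0 < t (j - 1) := lt_of_lt_of_le (by positivity) htjmlb
    have htjT : t j ≤ T := by
      rw [htj]
      nlinarith [Real.rpow_le_one hx0.le hx1 hδ0.le]
    -- step bound
    have hτj : τ j ≤ T * δ * x ^ (δ - 1) * (N:ℝ)⁻¹ := by
      rw [hτ j (by omega), htj, htjm]
      have hsub := aux_rpow_sub hjm0 hle hδ
      have hdiff : x - ((j:ℝ) - 1) / (N:ℝ) = (N:ℝ)⁻¹ := by
        rw [hxdef]
        field_simp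
        ring
      rw [hdiff] at hsub
      calc T * x ^ δ - T * (((j:ℝ) - 1) / (N:ℝ)) ^ δ
          = T * (x ^ δ - (((j:ℝ) - 1) / (N:ℝ)) ^ δ) := by ring
        _ ≤ T * (δ * x ^ (δ - 1) * (N:ℝ)⁻¹) := mul_le_mul_of_nonneg_left hsub hT.le
        _ = T * δ * x ^ (δ - 1) * (N:ℝ)⁻¹ := by ring
    have hτj0 : 0 ≤ τ j := by
      rw [hτ j (by omega), htj, htjm]
      have : (((j:ℝ) - 1) / (N:ℝ)) ^ δ ≤ x ^ δ :=
        Real.rpow_le_rpow hjm0 hle hδ0.le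
      nlinarith
    -- sup bound
    have hsup : sSup ((fun s => |u'' s|) '' Set.Ioo (t (j - 1)) (t j)) ≤
        C₀ * t (j - 1) ^ (α - 2) := by
      refine Real.sSup_le ?_ (by positivity)
      rintro a ⟨s, hs, rfl⟩
      have hs0 : 0 < s := lt_trans htjmpos hs.1
      have hsT : s ∈ Set.Ioc (0:ℝ) T := ⟨hs0, hs.2.le.trans htjT⟩
      calc |u'' s| ≤ C₀ * s ^ (α - 2) := hb2 s hsT
        _ ≤ C₀ * t (j - 1) ^ (α - 2) :=
          mul_le_mul_of_nonneg_left
            (Real.rpow_le_rpow_of_nonpos htjmpos hs.1.le (by linarith)) hC₀.le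
    have hsup' : sSup ((fun s => |u'' s|) '' Set.Ioo (t (j - 1)) (t j)) ≤
        C₀ * (T * (x / 2) ^ δ) ^ (α - 2) := by
      refine hsup.trans (mul_le_mul_of_nonneg_left
        (Real.rpow_le_rpow_of_nonpos (by positivity) htjmlb (by linarith)) hC₀.le)
    have hsup0 : 0 ≤ sSup ((fun s => |u'' s|) '' Set.Ioo (t (j - 1)) (t j)) := by
      refine Real.sSup_nonneg ?_
      rintro a ⟨s, hs, rfl⟩
      exact abs_nonneg _
    have hτp : τ j ^ (2 - α) ≤ (T * δ * x ^ (δ - 1) * (N:ℝ)⁻¹) ^ (2 - α) :=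
      Real.rpow_le_rpow hτj0 hτj (by linarith)
    have hfinal : ψ j ≤ (T * δ * x ^ (δ - 1) * (N:ℝ)⁻¹) ^ (2 - α) * (T * x ^ δ) ^ α *
        (C₀ * (T * (x / 2) ^ δ) ^ (α - 2)) := by
      rw [hψj j hj2 hjN]
      have htja : t j ^ α = (T * x ^ δ) ^ α := by rw [htj]
      rw [htja]
      refine mul_le_mul (mul_le_mul_of_nonneg_right hτp (Real.rpow_nonneg (by positivity) _))
        hsup' hsup0 (by positivity)
    calc ψ j ≤ (T * δ * x ^ (δ - 1) * (N:ℝ)⁻¹) ^ (2 - α) * (T * x ^ δ) ^ α *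
          (C₀ * (T * (x / 2) ^ δ) ^ (α - 2)) := hfinal
      _ ≤ (C₀ * T ^ α * δ ^ (2 - α) * 2 ^ (δ * (2 - α))) * (N:ℝ) ^ (-m) :=
          aux_combine α T δ C₀ hα0 hα1 hT hδ hC₀ hx0 hx1 hn1 hxn
      _ ≤ _ := by linarith
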